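/- Let h_inv be a conditionally invariant classifier and assume there is no label shift between the first source distribution P^(1) and the target distribution P^T. Then for every classifier h : R^p → {1,…,L}: | [R^T(h) − R^(1)(h)] − [P(h(X^T) ≠ h_inv(X^T)) − P(h(X^(1)) ≠ h_inv(X^(1)))] | ≤ 2·R^(1)(h_inv). -/

import Mathlib

open MeasureTheory ProbabilityTheory

noncomputable section

/-- Covariate space `ℝ^n`. -/
abbrev Vec (n : ℕ) := Fin n → ℝ

/-- 0-1 population risk of a classifier `h` under a joint distribution on
covariates and labels. -/
def risk {p L : ℕ} (P : Measure (Vec p × Fin L)) (h : Vec p → Fin L) : ℝ :=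
  (P {z | h z.1 ≠ z.2}).toReal

/-- Importance-weighted population risk `E[ω_Y · 1{h(X) ≠ Y}]`. -/
def wrisk {p L : ℕ} (P : Measure (Vec p × Fin L)) (h : Vec p → Fin L) (ω : Fin L → ℝ) : ℝ :=
  ∫ z, ω z.2 * (if h z.1 ≠ z.2 then (1:ℝ) else 0) ∂P

/-- Conditional law of `φ(X)` given `Y = y`. -/
def condLaw {p L : ℕ} {α : Type*} [MeasurableSpace α]
    (P : Measure (Vec p × Fin L)) (φ : Vec p → α) (y : Fin L) : Measure α :=
  (P[|{z | z.2 = y}]).map (fun z => φ z.1)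

/-- `G`-divergence between two distributions on `ℝ^q`. -/
def Gdiv {q L : ℕ} (G : Set (Vec q → Fin L)) (P Q : Measure (Vec q)) : ℝ :=
  ⨆ g : G, ⨆ y : Fin L, |(P {z | g.1 z = y}).toReal - (Q {z | g.1 z = y}).toReal|

/-- Deviation from conditional invariance of a feature map `φ`. -/
def Psi {p q L M : ℕ} (G : Set (Vec q → Fin L))
    (PT : Measure (Vec p × Fin L)) (Ps : Fin M → Measure (Vec p × Fin L))
    (φ : Vec p → Vec q) : ℝ :=
  ⨆ m : Fin M, ⨆ y : Fin L, Gdiv G (condLaw PT φ y) (condLaw (Ps m) φ y)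

/-- True importance weights `w^(m)_j = P(Y^T = j)/P(Y^(m) = j)`. -/
def trueW {p L M : ℕ} (PT : Measure (Vec p × Fin L)) (Ps : Fin M → Measure (Vec p × Fin L))
    (m : Fin M) (j : Fin L) : ℝ :=
  (PT {z | z.2 = j}).toReal / ((Ps m) {z | z.2 = j}).toReal

/-- Sup norm on `ℝ^L`. -/
def supNorm {L : ℕ} (v : Fin L → ℝ) : ℝ := ⨆ j : Fin L, |v j|


private lemma measSet_ne' {p L : ℕ} (f g : Vec p × Fin L → Fin L) (hf : Measurable f) (hg : Measurable g) :
    MeasurableSet {z | f z ≠ g z} := by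
  have he : {z | f z = g z} = ⋃ y : Fin L, (f ⁻¹' {y}) ∩ (g ⁻¹' {y}) := by
    ext z
    constructor
    · intro h; exact Set.mem_iUnion.2 ⟨f z, rfl, h.symm⟩
    · intro h
      obtain ⟨y, h1, h2⟩ := Set.mem_iUnion.1 h
      show f z = g z
      rw [Set.mem_singleton_iff.1 h1, Set.mem_singleton_iff.1 h2]
  have hm : MeasurableSet {z | f z = g z} := by
    rw [he]
    exact MeasurableSet.iUnion fun y => (hf (measurableSet_singleton y)).inter (hg (measurableSet_singleton y))
  exact hm.compl

private lemma decomp' {p L : ℕ} (P : Measure (Vec p × Fin L)) (S : Set (Vec p × Fin L))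
    (hS : MeasurableSet S) :
    P S = ∑ y : Fin L, P (S ∩ {z | z.2 = y}) := by
  have he : S = ⋃ y : Fin L, S ∩ {z | z.2 = y} := by
    ext z; simp [Set.mem_iUnion]
  have hmy : ∀ y : Fin L, MeasurableSet {z : Vec p × Fin L | z.2 = y} := fun y =>
    measurable_snd (measurableSet_singleton y)
  have hdisj : Pairwise (Function.onFun Disjoint fun y => S ∩ {z : Vec p × Fin L | z.2 = y}) := by
    intro a b hab
    apply Set.disjoint_left.2
    rintro z ⟨_, hz1⟩ ⟨_, hz2⟩
    exact hab (hz1 ▸ hz2 ▸ rfl)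
  conv_lhs => rw [he]
  rw [measure_iUnion hdisj (fun y => hS.inter (hmy y)), tsum_fintype]

private lemma absdiff' {p L : ℕ} (P : Measure (Vec p × Fin L)) [IsProbabilityMeasure P]
    (h hinv : Vec p → Fin L) :
    |(P {z | h z.1 ≠ z.2}).toReal - (P {z | h z.1 ≠ hinv z.1}).toReal| ≤
      (P {z | hinv z.1 ≠ z.2}).toReal := by
  set A := {z : Vec p × Fin L | h z.1 ≠ z.2}
  set B := {z : Vec p × Fin L | h z.1 ≠ hinv z.1}
  set C := {z : Vec p × Fin L | hinv z.1 ≠ z.2}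
  have hAB : A ⊆ B ∪ C := by
    intro z hz
    by_cases hb : h z.1 = hinv z.1
    · right; show hinv z.1 ≠ z.2; rw [← hb]; exact hz
    · left; exact hb
  have hBA : B ⊆ A ∪ C := by
    intro z hz
    by_cases ha : h z.1 = z.2
    · right; show hinv z.1 ≠ z.2; rw [← ha]; exact fun e => hz e.symm
    · left; exact ha
  have h1 : P A ≤ P B + P C := le_trans (measure_mono hAB) (measure_union_le _ _)
  have h2 : P B ≤ P A + P C := le_trans (measure_mono hBA) (measure_union_le _ _)
  have fA := measure_ne_top P A
  have fB := measure_ne_top P B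
  have fC := measure_ne_top P C
  rw [abs_sub_le_iff]
  constructor
  · have := ENNReal.toReal_mono (by finiteness) h1
    rw [ENNReal.toReal_add fB fC] at this
    linarith
  · have := ENNReal.toReal_mono (by finiteness) h2
    rw [ENNReal.toReal_add fA fC] at this
    linarith

private lemma condLaw_apply' {p L : ℕ} (P : Measure (Vec p × Fin L)) (hinv : Vec p → Fin L)
    (hinvMeas : Measurable hinv) (y : Fin L) :
    condLaw P hinv y {j | j ≠ y} =
      (P {z | z.2 = y})⁻¹ * P ({z | z.2 = y} ∩ {z | hinv z.1 ≠ y}) := by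
  have hs : MeasurableSet {z : Vec p × Fin L | z.2 = y} :=
    measurable_snd (measurableSet_singleton y)
  have hT : MeasurableSet {j : Fin L | j ≠ y} :=
    (measurableSet_singleton y).compl
  rw [condLaw, Measure.map_apply (show Measurable fun z : Vec p × Fin L => hinv z.1 from hinvMeas.comp measurable_fst) hT, cond_apply hs]
  rfl

private lemma riskEq' {p L M : ℕ} [NeZero M]
    (PT : Measure (Vec p × Fin L)) [IsProbabilityMeasure PT]
    (Ps : Fin M → Measure (Vec p × Fin L)) [∀ m, IsProbabilityMeasure (Ps m)]
    (hinv : Vec p → Fin L) (hinvMeas : Measurable hinv)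
    (hCI : ∀ (m : Fin M) (y : Fin L), condLaw (Ps m) hinv y = condLaw PT hinv y)
    (hNoLabelShift : ∀ y : Fin L, (Ps 0) {z | z.2 = y} = PT {z | z.2 = y}) :
    PT {z | hinv z.1 ≠ z.2} = (Ps 0) {z | hinv z.1 ≠ z.2} := by
  have hS : MeasurableSet {z : Vec p × Fin L | hinv z.1 ≠ z.2} :=
    measSet_ne' _ _ (hinvMeas.comp measurable_fst) measurable_snd
  rw [decomp' PT _ hS, decomp' (Ps 0) _ hS]
  refine Finset.sum_congr rfl fun y _ => ?_
  have hset : {z : Vec p × Fin L | hinv z.1 ≠ z.2} ∩ {z | z.2 = y}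
      = {z | z.2 = y} ∩ {z | hinv z.1 ≠ y} := by
    ext z
    constructor
    · rintro ⟨h1, h2⟩; exact ⟨h2, fun e => h1 (e.trans h2.symm)⟩
    · rintro ⟨h1, h2⟩; exact ⟨fun e => h2 (e.trans h1), h1⟩
  rw [hset]
  by_cases h0 : PT {z : Vec p × Fin L | z.2 = y} = 0
  · have h0' : (Ps 0) {z : Vec p × Fin L | z.2 = y} = 0 := by rw [hNoLabelShift y, h0]
    have e1 : PT ({z : Vec p × Fin L | z.2 = y} ∩ {z | hinv z.1 ≠ y}) = 0 :=
      le_antisymm (h0 ▸ measure_mono Set.inter_subset_left) zero_le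
    have e2 : (Ps 0) ({z : Vec p × Fin L | z.2 = y} ∩ {z | hinv z.1 ≠ y}) = 0 :=
      le_antisymm (h0' ▸ measure_mono Set.inter_subset_left) zero_le
    rw [e1, e2]
  · have key := congrArg (fun μ : Measure (Fin L) => μ {j | j ≠ y}) (hCI 0 y)
    simp only [condLaw_apply' PT hinv hinvMeas y, condLaw_apply' (Ps 0) hinv hinvMeas y,
      hNoLabelShift y] at key
    have hinv0 : (PT {z : Vec p × Fin L | z.2 = y})⁻¹ ≠ 0 :=
      ENNReal.inv_ne_zero.2 (measure_ne_top _ _)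
    have hinvtop : (PT {z : Vec p × Fin L | z.2 = y})⁻¹ ≠ ⊤ :=
      ENNReal.inv_ne_top.2 h0
    exact ((ENNReal.mul_right_inj hinv0 hinvtop).1 key).symm

/-- **Theorem 4.1**: a conditionally invariant classifier controls the source–target
risk difference of any classifier via observable prediction-agreement quantities. -/
theorem statement7 {p L M : ℕ} [NeZero M]
    (PT : Measure (Vec p × Fin L)) [IsProbabilityMeasure PT]
    (Ps : Fin M → Measure (Vec p × Fin L)) [∀ m, IsProbabilityMeasure (Ps m)]
    (hinv : Vec p → Fin L) (hinvMeas : Measurable hinv)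
    (hCI : ∀ (m : Fin M) (y : Fin L), condLaw (Ps m) hinv y = condLaw PT hinv y)
    (hNoLabelShift : ∀ y : Fin L, (Ps 0) {z | z.2 = y} = PT {z | z.2 = y})
    (h : Vec p → Fin L) (hMeas : Measurable h) :
    |(risk PT h - risk (Ps 0) h) -
        ((PT {z | h z.1 ≠ hinv z.1}).toReal - ((Ps 0) {z | h z.1 ≠ hinv z.1}).toReal)| ≤
      2 * risk (Ps 0) hinv := by
  have hreq : risk PT hinv = risk (Ps 0) hinv := by
    unfold risk
    rw [riskEq' PT Ps hinv hinvMeas hCI hNoLabelShift]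
  have hT := absdiff' PT h hinv
  have hS := absdiff' (Ps 0) h hinv
  unfold risk at *
  calc |(PT {z | h z.1 ≠ z.2}).toReal - ((Ps 0) {z | h z.1 ≠ z.2}).toReal -
        ((PT {z | h z.1 ≠ hinv z.1}).toReal - ((Ps 0) {z | h z.1 ≠ hinv z.1}).toReal)|
      = |((PT {z | h z.1 ≠ z.2}).toReal - (PT {z | h z.1 ≠ hinv z.1}).toReal) -
        (((Ps 0) {z | h z.1 ≠ z.2}).toReal - ((Ps 0) {z | h z.1 ≠ hinv z.1}).toReal)| := by
        ring_nf
    _ ≤ |(PT {z | h z.1 ≠ z.2}).toReal - (PT {z | h z.1 ≠ hinv z.1}).toReal| +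
        |((Ps 0) {z | h z.1 ≠ z.2}).toReal - ((Ps 0) {z | h z.1 ≠ hinv z.1}).toReal| :=
        abs_sub _ _
    _ ≤ (PT {z | hinv z.1 ≠ z.2}).toReal + ((Ps 0) {z | hinv z.1 ≠ z.2}).toReal := by
        exact add_le_add hT hS
    _ = 2 * ((Ps 0) {z | hinv z.1 ≠ z.2}).toReal := by rw [hreq]; ring

end
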